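/- For every n ≥ 1, the 2^n elements of SA(n) form an orthogonal basis of ℝ^(2^n); in particular the linear span of SA(n) is all of ℝ^(2^n). -/

import Mathlib

noncomputable def Smat (k : ℕ) : Matrix (Fin (2 ^ (k + 1))) (Fin (2 ^ k)) ℝ :=
  Matrix.of fun i j =>
    if (i : ℕ) < 2 ^ k then (if (i : ℕ) = (j : ℕ) then 1 else 0)
    else (if (i : ℕ) + (j : ℕ) = 2 ^ (k + 1) - 1 then 1 else 0)

noncomputable def Amat (k : ℕ) : Matrix (Fin (2 ^ (k + 1))) (Fin (2 ^ k)) ℝ :=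
  Matrix.of fun i j =>
    if (i : ℕ) < 2 ^ k then (if (i : ℕ) = (j : ℕ) then -1 else 0)
    else (if (i : ℕ) + (j : ℕ) = 2 ^ (k + 1) - 1 then 1 else 0)

noncomputable def Fmat (b : Bool) (k : ℕ) : Matrix (Fin (2 ^ (k + 1))) (Fin (2 ^ k)) ℝ :=
  if b then Amat k else Smat k

noncomputable def prodVec : (n : ℕ) → (Fin n → Bool) → (Fin (2 ^ n) → ℝ)
  | 0, _ => fun _ => 1
  | n + 1, c => (Fmat (c (Fin.last n)) n).mulVec (prodVec n fun i => c i.castSucc)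

def SA (n : ℕ) : Set (Fin (2 ^ n) → ℝ) := { v | ∃ c : Fin n → Bool, v = prodVec n c }

lemma Fmat_mulVec_lt (b : Bool) (k : ℕ) (u : Fin (2 ^ k) → ℝ) (i : Fin (2 ^ (k + 1)))
    (h : (i : ℕ) < 2 ^ k) :
    (Fmat b k).mulVec u i = (if b then -1 else 1) * u ⟨i, h⟩ := by
  have key : ∀ (c : ℝ), (∑ j : Fin (2 ^ k),
      (if (i : ℕ) = (j : ℕ) then c else 0) * u j) = c * u ⟨i, h⟩ := by
    intro c
    rw [Finset.sum_eq_single (⟨(i : ℕ), h⟩ : Fin (2 ^ k))]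
    · simp
    · intro j _ hj
      rw [if_neg, zero_mul]
      intro hij
      exact hj (by ext; simpa using hij.symm)
    · simp
  cases b <;>
    simp only [Matrix.mulVec, dotProduct, Fmat, Smat, Amat, if_true, if_false,
      Bool.false_eq_true, Matrix.of_apply, h, if_pos] <;> exact key _

lemma Fmat_mulVec_ge (b : Bool) (k : ℕ) (u : Fin (2 ^ k) → ℝ) (i : Fin (2 ^ (k + 1)))
    (h : ¬ (i : ℕ) < 2 ^ k) :
    (Fmat b k).mulVec u i = u ⟨2 ^ (k + 1) - 1 - (i : ℕ), by have := i.isLt; omega⟩ := by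
  have hi := i.isLt
  have key : (∑ j : Fin (2 ^ k),
      (if (i : ℕ) + (j : ℕ) = 2 ^ (k + 1) - 1 then (1:ℝ) else 0) * u j) =
      u ⟨2 ^ (k + 1) - 1 - (i : ℕ), by omega⟩ := by
    rw [Finset.sum_eq_single (⟨2 ^ (k + 1) - 1 - (i : ℕ), by omega⟩ : Fin (2 ^ k))]
    · rw [if_pos (by simp; omega), one_mul]
    · intro j _ hj
      rw [if_neg, zero_mul]
      intro hij
      exact hj (by ext; simp; omega)
    · simp
  cases b <;>
    simp only [Matrix.mulVec, dotProduct, Fmat, Smat, Amat, if_true, if_false,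
      Bool.false_eq_true, Matrix.of_apply, h, if_neg, ite_false] <;> exact key

lemma dot_prodVec (n : ℕ) (c c' : Fin n → Bool) :
    ∑ i, prodVec n c i * prodVec n c' i = if c = c' then (2 : ℝ) ^ n else 0 := by
  induction n with
  | zero =>
      simp [prodVec, Subsingleton.elim c c']
  | succ n ih =>
      set b := c (Fin.last n) with hb
      set b' := c' (Fin.last n) with hb'
      set u := prodVec n (fun i => c i.castSucc) with hu
      set u' := prodVec n (fun i => c' i.castSucc) with hu'
      have hpv : prodVec (n + 1) c = (Fmat b n).mulVec u := rfl
      have hpv' : prodVec (n + 1) c' = (Fmat b' n).mulVec u' := rfl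
      clear_value b b'
      have hp : 2 ^ (n + 1) = 2 ^ n + 2 ^ n := by ring
      set g : Fin (2 ^ (n + 1)) → ℝ :=
        fun i => prodVec (n + 1) c i * prodVec (n + 1) c' i with hg
      have hsplit : (∑ i, g i) =
          ∑ i : Fin (2 ^ n), g (Fin.cast hp.symm (Fin.castAdd (2 ^ n) i)) +
          ∑ i : Fin (2 ^ n), g (Fin.cast hp.symm (Fin.natAdd (2 ^ n) i)) := by
        have h1 : (∑ i, g i) = ∑ i : Fin (2 ^ n + 2 ^ n), g (Fin.cast hp.symm i) :=
          Fintype.sum_equiv (finCongr hp) g (fun i => g (Fin.cast hp.symm i)) (fun i => rfl)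
        rw [h1, Fin.sum_univ_add]
      have hfirst : ∀ i : Fin (2 ^ n),
          g (Fin.cast hp.symm (Fin.castAdd (2 ^ n) i)) =
          ((if b then (-1:ℝ) else 1) * (if b' then -1 else 1)) * (u i * u' i) := by
        intro i
        have hlt : ((Fin.cast hp.symm (Fin.castAdd (2 ^ n) i) : Fin (2 ^ (n+1))) : ℕ) < 2 ^ n :=
          i.isLt
        simp only [hg, hpv, hpv', Fmat_mulVec_lt _ _ _ _ hlt]
        have hii : (⟨((Fin.cast hp.symm (Fin.castAdd (2 ^ n) i)) : ℕ), hlt⟩ : Fin (2 ^ n)) = i := by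
          ext; rfl
        rw [hii]; ring
      have hsecond : ∀ i : Fin (2 ^ n),
          g (Fin.cast hp.symm (Fin.natAdd (2 ^ n) i)) = u i.rev * u' i.rev := by
        intro i
        have hge : ¬ ((Fin.cast hp.symm (Fin.natAdd (2 ^ n) i) : Fin (2 ^ (n+1))) : ℕ) < 2 ^ n := by
          simp
        simp only [hg, hpv, hpv', Fmat_mulVec_ge _ _ _ _ hge]
        have hrev : (⟨2 ^ (n+1) - 1 - ((Fin.cast hp.symm (Fin.natAdd (2 ^ n) i)) : ℕ), by
            have := i.isLt; omega⟩ : Fin (2 ^ n)) = i.rev := by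
          ext
          simp [Fin.rev]
          have := i.isLt
          omega
        rw [hrev]
      have hD : ∑ i : Fin (2 ^ n), u i.rev * u' i.rev = ∑ i, u i * u' i :=
        Fintype.sum_bijective Fin.rev Fin.rev_involutive.bijective
          (fun i : Fin (2 ^ n) => u i.rev * u' i.rev) (fun i => u i * u' i)
          (fun i => rfl)
      have key : (∑ i, g i) =
          ((if b then (-1:ℝ) else 1) * (if b' then -1 else 1) + 1) * ∑ i, u i * u' i := by
        rw [hsplit, Finset.sum_congr rfl (fun i _ => hfirst i),
          Finset.sum_congr rfl (fun i _ => hsecond i), hD, ← Finset.mul_sum, add_mul, one_mul]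
      have ihuu : (∑ i, u i * u' i) =
          if (fun i : Fin n => c i.castSucc) = (fun i => c' i.castSucc) then (2:ℝ) ^ n else 0 :=
        ih _ _
      show (∑ i, g i) = _
      rw [key, ihuu]
      by_cases hcc : c = c'
      · have htail : (fun i : Fin n => c i.castSucc) = (fun i => c' i.castSucc) := by
          rw [hcc]
        have hbb : b = b' := by rw [hb, hb', hcc]
        rw [if_pos htail, if_pos hcc, hbb]
        cases b' <;> simp [pow_succ] <;> ring
      · rw [if_neg hcc]
        by_cases hbb : b = b'
        · have htail : (fun i : Fin n => c i.castSucc) ≠ (fun i => c' i.castSucc) := by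
            intro htail
            apply hcc
            funext i
            refine Fin.lastCases ?_ ?_ i
            · rw [← hb, ← hb', hbb]
            · intro j; exact congrFun htail j
          rw [if_neg htail, mul_zero]
        · have : (if b then (-1:ℝ) else 1) * (if b' then -1 else 1) + 1 = 0 := by
            cases b <;> cases b' <;> simp_all
          rw [this, zero_mul]

lemma SA_eq_range (n : ℕ) : SA n = Set.range (prodVec n) := by
  ext v
  simp [SA, Set.range, eq_comm]

lemma prodVec_linearIndependent (n : ℕ) : LinearIndependent ℝ (prodVec n) := by
  rw [Fintype.linearIndependent_iff]
  intro g hg c0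
  have h0 : ∑ i, (∑ c : Fin n → Bool, g c • prodVec n c) i * prodVec n c0 i = 0 := by
    rw [hg]; simp
  have hswap : ∑ i, (∑ c : Fin n → Bool, g c • prodVec n c) i * prodVec n c0 i =
      ∑ c : Fin n → Bool, g c * ∑ i, prodVec n c i * prodVec n c0 i := by
    simp only [Finset.sum_apply, Pi.smul_apply, smul_eq_mul, Finset.sum_mul, Finset.mul_sum]
    rw [Finset.sum_comm]
    exact Finset.sum_congr rfl fun c _ => Finset.sum_congr rfl fun i _ => by ring
  rw [hswap] at h0
  have hone : ∀ c ∈ Finset.univ, c ≠ c0 →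
      g c * (∑ i, prodVec n c i * prodVec n c0 i) = 0 := by
    intro c _ hc
    rw [dot_prodVec, if_neg hc, mul_zero]
  rw [Finset.sum_eq_single c0 hone (by simp)] at h0
  rw [dot_prodVec, if_pos rfl] at h0
  have h2 : (2:ℝ) ^ n ≠ 0 := by positivity
  exact (mul_eq_zero.mp h0).resolve_right h2

/-- the 2^n elements of SA(n) form an orthogonal basis of ℝ^(2^n);
in particular the linear span of SA(n) is all of ℝ^(2^n). -/
theorem stmt9 (n : ℕ) (hn : 1 ≤ n) :
    (∀ v ∈ SA n, ∀ w ∈ SA n, v ≠ w → ∑ i, v i * w i = 0) ∧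
    LinearIndependent ℝ (fun v : SA n => (v : Fin (2 ^ n) → ℝ)) ∧
    Submodule.span ℝ (SA n) = ⊤ := by
  refine ⟨?_, ?_, ?_⟩
  · rintro v ⟨c, rfl⟩ w ⟨c', rfl⟩ hvw
    have hcc : c ≠ c' := fun h => hvw (by rw [h])
    rw [dot_prodVec, if_neg hcc]
  · rw [SA_eq_range]
    exact (linearIndepOn_id_range_iff (prodVec_linearIndependent n).injective).mpr (prodVec_linearIndependent n)
  · rw [SA_eq_range]
    apply (prodVec_linearIndependent n).span_eq_top_of_card_eq_finrank
    simp [Module.finrank_pi]
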